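/- Let λ > 0, let M = [[2,1],[1,2]] with quadratic form Q(n) = n₁²+n₁n₂+n₂², and define the tropical theta function φ : ℝ² → ℝ by φ(ξ) = sup_{n ∈ ℤ²} (⟨n, ξ⟩ − λ·Q(n)). Then: (a) for each ξ the supremum is finite and attained at some n ∈ ℤ²; and (b) for all m ∈ ℤ² and ξ ∈ ℝ², φ(ξ + λ·Mm) = φ(ξ) + ⟨m, ξ⟩ + λ·Q(m). -/

import Mathlib

private lemma trop_key (lam x y c1 c2 : ℝ) (hlam : 0 < lam)
    (h : 4 * (|c1| + |c2|) < lam * |x| ∨ 4 * (|c1| + |c2|) < lam * |y|) :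
    x * c1 + y * c2 - lam * (x ^ 2 + x * y + y ^ 2) ≤ 0 := by
  have hx1 : x * c1 ≤ |x| * |c1| := (le_abs_self _).trans (le_of_eq (abs_mul x c1))
  have hy2 : y * c2 ≤ |y| * |c2| := (le_abs_self _).trans (le_of_eq (abs_mul y c2))
  have hxy : -(|x| * |y|) ≤ x * y := by
    rw [← abs_mul]; exact neg_abs_le _
  have hx2 : x ^ 2 = |x| ^ 2 := (sq_abs x).symm
  have hy2' : y ^ 2 = |y| ^ 2 := (sq_abs y).symm
  have h1 : (0:ℝ) ≤ |c1| := abs_nonneg _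
  have h2 : (0:ℝ) ≤ |c2| := abs_nonneg _
  have h3 : (0:ℝ) ≤ |x| := abs_nonneg _
  have h4 : (0:ℝ) ≤ |y| := abs_nonneg _
  rcases le_total |x| |y| with hl | hl
  · have h5 : 4 * (|c1| + |c2|) < lam * |y| := by
      rcases h with h | h
      · exact h.trans_le (by nlinarith)
      · exact h
    nlinarith [sq_nonneg (2 * |y| - |x|), sq_nonneg (|x| - |y|), mul_nonneg h3 h1,
      mul_nonneg h4 h2]
  · have h5 : 4 * (|c1| + |c2|) < lam * |x| := by
      rcases h with h | h
      · exact h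
      · exact h.trans_le (by nlinarith)
    nlinarith [sq_nonneg (2 * |x| - |y|), sq_nonneg (|x| - |y|), mul_nonneg h3 h1,
      mul_nonneg h4 h2]

/-- The tropical theta function `φ(ξ) = sup_{n ∈ ℤ²} (⟨n, ξ⟩ − λ Q(n))` with
`Q(n) = n₁² + n₁n₂ + n₂²`:
(a) the supremum is finite and attained; (b) quasi-periodicity
`φ(ξ + λ·Mm) = φ(ξ) + ⟨m, ξ⟩ + λ·Q(m)` for `M = [[2,1],[1,2]]`. -/
theorem tropical_theta (lam : ℝ) (hlam : 0 < lam) :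
    (∀ ξ : ℝ × ℝ, ∃ n₀ : ℤ × ℤ,
        IsGreatest
          (Set.range fun n : ℤ × ℤ =>
            (n.1 : ℝ) * ξ.1 + (n.2 : ℝ) * ξ.2
              - lam * ((n.1 : ℝ) ^ 2 + (n.1 : ℝ) * (n.2 : ℝ) + (n.2 : ℝ) ^ 2))
          ((n₀.1 : ℝ) * ξ.1 + (n₀.2 : ℝ) * ξ.2
              - lam * ((n₀.1 : ℝ) ^ 2 + (n₀.1 : ℝ) * (n₀.2 : ℝ) + (n₀.2 : ℝ) ^ 2)))
    ∧
    (∀ (m : ℤ × ℤ) (ξ : ℝ × ℝ),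
        sSup (Set.range fun n : ℤ × ℤ =>
            (n.1 : ℝ) * (ξ.1 + lam * (2 * (m.1 : ℝ) + (m.2 : ℝ)))
              + (n.2 : ℝ) * (ξ.2 + lam * ((m.1 : ℝ) + 2 * (m.2 : ℝ)))
              - lam * ((n.1 : ℝ) ^ 2 + (n.1 : ℝ) * (n.2 : ℝ) + (n.2 : ℝ) ^ 2))
          = sSup (Set.range fun n : ℤ × ℤ =>
              (n.1 : ℝ) * ξ.1 + (n.2 : ℝ) * ξ.2
                - lam * ((n.1 : ℝ) ^ 2 + (n.1 : ℝ) * (n.2 : ℝ) + (n.2 : ℝ) ^ 2))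
            + ((m.1 : ℝ) * ξ.1 + (m.2 : ℝ) * ξ.2)
            + lam * ((m.1 : ℝ) ^ 2 + (m.1 : ℝ) * (m.2 : ℝ) + (m.2 : ℝ) ^ 2)) := by
  have ha : ∀ ξ : ℝ × ℝ, ∃ n₀ : ℤ × ℤ,
      IsGreatest
        (Set.range fun n : ℤ × ℤ =>
          (n.1 : ℝ) * ξ.1 + (n.2 : ℝ) * ξ.2
            - lam * ((n.1 : ℝ) ^ 2 + (n.1 : ℝ) * (n.2 : ℝ) + (n.2 : ℝ) ^ 2))
        ((n₀.1 : ℝ) * ξ.1 + (n₀.2 : ℝ) * ξ.2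
            - lam * ((n₀.1 : ℝ) ^ 2 + (n₀.1 : ℝ) * (n₀.2 : ℝ) + (n₀.2 : ℝ) ^ 2)) := by
    intro ξ
    set f : ℤ × ℤ → ℝ := fun n =>
      (n.1 : ℝ) * ξ.1 + (n.2 : ℝ) * ξ.2
        - lam * ((n.1 : ℝ) ^ 2 + (n.1 : ℝ) * (n.2 : ℝ) + (n.2 : ℝ) ^ 2) with hf
    obtain ⟨N, hN⟩ := exists_nat_gt (4 * (|ξ.1| + |ξ.2|) / lam)
    set B : Finset (ℤ × ℤ) := Finset.Icc (-(N : ℤ)) N ×ˢ Finset.Icc (-(N : ℤ)) N with hB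
    have h0B : ((0, 0) : ℤ × ℤ) ∈ B := by
      simp [hB, Finset.mem_product]
    obtain ⟨n₀, hn₀B, hn₀⟩ := Finset.exists_max_image B f ⟨_, h0B⟩
    refine ⟨n₀, ⟨⟨n₀, rfl⟩, ?_⟩⟩
    rintro x ⟨n, rfl⟩
    by_cases hn : n ∈ B
    · exact hn₀ n hn
    · have hf0 : f (0, 0) = 0 := by simp [hf]
      have hle : (0:ℝ) ≤ f n₀ := hf0 ▸ hn₀ _ h0B
      have hout : 4 * (|ξ.1| + |ξ.2|) < lam * |(n.1 : ℝ)| ∨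
          4 * (|ξ.1| + |ξ.2|) < lam * |(n.2 : ℝ)| := by
        have hlt : 4 * (|ξ.1| + |ξ.2|) < lam * (N : ℝ) := by
          rw [div_lt_iff₀ hlam] at hN; linarith [hN]
        simp only [hB, Finset.mem_product, Finset.mem_Icc, not_and_or] at hn
        rcases hn with hn | hn
        · left
          have : (N : ℝ) < |(n.1 : ℝ)| := by
            rw [← Int.cast_abs]
            exact_mod_cast (by rcases abs_cases n.1 with ⟨h,_⟩|⟨h,_⟩ <;> omega : (N : ℤ) < |n.1|)
          exact hlt.trans_le (by nlinarith)
        · right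
          have : (N : ℝ) < |(n.2 : ℝ)| := by
            rw [← Int.cast_abs]
            exact_mod_cast (by rcases abs_cases n.2 with ⟨h,_⟩|⟨h,_⟩ <;> omega : (N : ℤ) < |n.2|)
          exact hlt.trans_le (by nlinarith)
      have := trop_key lam (n.1 : ℝ) (n.2 : ℝ) ξ.1 ξ.2 hlam hout
      calc f n ≤ 0 := this
        _ ≤ f n₀ := hle
  refine ⟨ha, ?_⟩
  intro m ξ
  obtain ⟨n₀, hmem, hub⟩ := ha ξ
  set f : ℤ × ℤ → ℝ := fun n =>
    (n.1 : ℝ) * ξ.1 + (n.2 : ℝ) * ξ.2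
      - lam * ((n.1 : ℝ) ^ 2 + (n.1 : ℝ) * (n.2 : ℝ) + (n.2 : ℝ) ^ 2) with hf
  set c : ℝ := ((m.1 : ℝ) * ξ.1 + (m.2 : ℝ) * ξ.2)
      + lam * ((m.1 : ℝ) ^ 2 + (m.1 : ℝ) * (m.2 : ℝ) + (m.2 : ℝ) ^ 2) with hc
  set g : ℤ × ℤ → ℝ := fun n =>
    (n.1 : ℝ) * (ξ.1 + lam * (2 * (m.1 : ℝ) + (m.2 : ℝ)))
      + (n.2 : ℝ) * (ξ.2 + lam * ((m.1 : ℝ) + 2 * (m.2 : ℝ)))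
      - lam * ((n.1 : ℝ) ^ 2 + (n.1 : ℝ) * (n.2 : ℝ) + (n.2 : ℝ) ^ 2) with hg
  have hshift : ∀ n : ℤ × ℤ, g (n + m) = f n + c := by
    intro n
    simp only [hg, hf, hc, Prod.fst_add, Prod.snd_add, Int.cast_add]
    ring
  have hG : IsGreatest (Set.range g) (f n₀ + c) := by
    constructor
    · exact ⟨n₀ + m, hshift n₀⟩
    · rintro x ⟨n, rfl⟩
      have : g n = f (n - m) + c := by
        have := hshift (n - m)
        simpa using this
      rw [this]
      exact add_le_add_left (hub ⟨n - m, rfl⟩) c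
  have hF : sSup (Set.range f) = f n₀ := IsGreatest.csSup_eq ⟨hmem, hub⟩
  rw [hG.csSup_eq, hF, hc]
  ring
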